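/- Let G be a group and suppose given, for each n ∈ ℕ: a finite group F_n, a group epimorphism α_n : G → F_n, a set 𝒟_n of subgroups of F_n, and for each D ∈ 𝒟_n (writing D̄ := α_n⁻¹(D)): a homotopy coherent G-action (Γ_{n,D}, Z_{n,D}), a metric space (W_{n,D}, d_{n,D}) with an isometric D̄-action, and a D̄-equivariant map f_{n,D} : G × Z_{n,D} → W_{n,D}, where D̄ acts on G × Z_{n,D} by left multiplication on the first factor. Assume that for all k ∈ ℕ and all g_0,…,g_k ∈ G: sup_{D∈𝒟_n, γ∈G, (t_1,…,t_k)∈[0,1]^k, z∈Z_{n,D}} d_{n,D}( f_{n,D}(γ, Γ_{n,D}(g_k,t_k,…,t_1,g_0,z)), f_{n,D}(γ g_k⋯g_0, z) ) → 0 as n → ∞. Then: (a) the formula Γ'_{n,D}(g_k,t_k,…,t_1,g_0,(γD̄,z)) := (g_k⋯g_0 γ D̄, Γ_{n,D}(g_k,t_k,…,t_1,g_0,z)) defines a homotopy coherent G-action on G/D̄ × Z_{n,D}; (b) the formula f'_{n,D}(γD̄,z) := [γ, f_{n,D}(γ⁻¹,z)] gives a well-defined map f'_{n,D} : G/D̄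 × Z_{n,D} → G ×_{D̄} W_{n,D}; and (c) for all k ∈ ℕ and g_0,…,g_k ∈ G one has sup_{D∈𝒟_n, γD̄∈G/D̄, (t_1,…,t_k)∈[0,1]^k, z∈Z_{n,D}} d( f'_{n,D}(Γ'_{n,D}(g_k,t_k,…,t_1,g_0,(γD̄,z))), g_k⋯g_0 · f'_{n,D}(γD̄,z) ) → 0 as n → ∞, where both compared points lie in the same D̄-coset component of G ×_{D̄} W_{n,D}, so their distance is defined. -/

import Mathlib

open unitInterval

universe u v

/-- A homotopy coherent action of a group `G` on a topological space `Z`.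

A point of the `k`-th summand `(G × [0,1])^k × G × Z` of the domain of `Γ` is encoded by the
data `(k, gs, ts, z)` where `gs n = g_n` for `n ≤ k` and `ts n = t_n` for `1 ≤ n ≤ k` (the
values of `gs` and `ts` outside these ranges are irrelevant by the field `junk`).  Continuity
of `Γ` is expressed, equivalently, as continuity in `(t,z)` for each fixed tuple of group
elements.  The remaining fields are the coherence conditions. -/
structure HCAction (G : Type u) [Group G] (Z : Type v) [TopologicalSpace Z] where
  Γ : ℕ → (ℕ → G) → (ℕ → I) → Z → Z
  continuous : ∀ (k : ℕ) (gs : ℕ → G), Continuous fun p : (ℕ → I) × Z => Γ k gs p.1 p.2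
  junk : ∀ (k : ℕ) (gs gs' : ℕ → G) (ts ts' : ℕ → I) (z : Z),
    (∀ n ≤ k, gs n = gs' n) → (∀ n, 1 ≤ n → n ≤ k → ts n = ts' n) →
    Γ k gs ts z = Γ k gs' ts' z
  rel_t0 : ∀ (k j : ℕ) (gs : ℕ → G) (ts : ℕ → I) (z : Z), 1 ≤ j → j ≤ k → ts j = 0 →
    Γ k gs ts z = Γ (k - j) (fun n => gs (n + j)) (fun n => ts (n + j)) (Γ (j - 1) gs ts z)
  rel_t1 : ∀ (k j : ℕ) (gs : ℕ → G) (ts : ℕ → I) (z : Z), 1 ≤ j → j ≤ k → ts j = 1 →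
    Γ k gs ts z =
      Γ (k - 1)
        (fun n => if n < j - 1 then gs n else if n = j - 1 then gs j * gs (j - 1) else gs (n + 1))
        (fun n => if n ≤ j - 1 then ts n else ts (n + 1)) z
  rel_g0 : ∀ (k : ℕ) (gs : ℕ → G) (ts : ℕ → I) (z : Z), 1 ≤ k → gs 0 = 1 →
    Γ k gs ts z = Γ (k - 1) (fun n => gs (n + 1)) (fun n => ts (n + 1)) z
  rel_gj : ∀ (k j : ℕ) (gs : ℕ → G) (ts : ℕ → I) (z : Z), 1 ≤ j → j ≤ k - 1 → gs j = 1 →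
    Γ k gs ts z =
      Γ (k - 1) (fun n => if n < j then gs n else gs (n + 1))
        (fun n => if n < j then ts n else if n = j then ts (j + 1) * ts j else ts (n + 1)) z
  rel_gk : ∀ (k : ℕ) (gs : ℕ → G) (ts : ℕ → I) (z : Z), 1 ≤ k → gs k = 1 →
    Γ k gs ts z = Γ (k - 1) gs ts z
  unit : ∀ (gs : ℕ → G) (ts : ℕ → I) (z : Z), gs 0 = 1 → Γ 0 gs ts z = z

namespace HCAction

variable {G : Type u} [Group G] [TopologicalSpace G] [DiscreteTopology G]
variable {Z : Type v} [TopologicalSpace Z]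

/-- The space of words `(g_k, t_k, …, g_0, z)` (with junk tails). -/
abbrev Word (G : Type u) (Z : Type v) := ℕ × (ℕ → G) × (ℕ → I) × Z

open Classical in
/-- The relations generating the equivalence relation defining the strictification. -/
inductive SRel (A : HCAction G Z) : Word G Z → Word G Z → Prop
  | junk (k : ℕ) (gs gs' : ℕ → G) (ts ts' : ℕ → I) (z : Z) :
      (∀ n ≤ k, gs n = gs' n) → (∀ n, 1 ≤ n → n ≤ k → ts n = ts' n) →
      SRel A (k, gs, ts, z) (k, gs', ts', z)
  | g0 (k : ℕ) (gs : ℕ → G) (ts : ℕ → I) (z : Z) : 1 ≤ k → gs 0 = 1 →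
      SRel A (k, gs, ts, z) (k - 1, fun n => gs (n + 1), fun n => ts (n + 1), z)
  | gj (k j : ℕ) (gs : ℕ → G) (ts : ℕ → I) (z : Z) : 1 ≤ j → j ≤ k - 1 → gs j = 1 →
      SRel A (k, gs, ts, z)
        (k - 1, fun n => if n < j then gs n else gs (n + 1),
          fun n => if n < j then ts n else if n = j then ts (j + 1) * ts j else ts (n + 1), z)
  | t1 (k j : ℕ) (gs : ℕ → G) (ts : ℕ → I) (z : Z) : 1 ≤ j → j ≤ k → ts j = 1 →
      SRel A (k, gs, ts, z)
        (k - 1,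
          fun n => if n < j - 1 then gs n else if n = j - 1 then gs j * gs (j - 1) else gs (n + 1),
          fun n => if n ≤ j - 1 then ts n else ts (n + 1), z)
  | t0 (k j : ℕ) (gs : ℕ → G) (ts : ℕ → I) (z : Z) : 1 ≤ j → j ≤ k → ts j = 0 →
      SRel A (k, gs, ts, z)
        (k - j, fun n => gs (n + j), fun n => ts (n + j), A.Γ (j - 1) gs ts z)

/-- The strictification of a homotopy coherent action: the quotient of the word space by the
equivalence relation generated by `SRel`, with the quotient topology. -/
def Strict (A : HCAction G Z) : Type (max u v) := Quot (SRel A)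

instance (A : HCAction G Z) : TopologicalSpace (Strict A) :=
  instTopologicalSpaceQuot

/-- The class of a word in the strictification. -/
def wmk (A : HCAction G Z) (w : Word G Z) : Strict A := Quot.mk _ w

/-- The canonical embedding `Z → X`, `z ↦ [e, z]`. -/
def emb (A : HCAction G Z) (z : Z) : Strict A := wmk A (0, fun _ => 1, fun _ => 0, z)

end HCAction
namespace HCAction

variable {G : Type u} [Group G] [TopologicalSpace G] [DiscreteTopology G]

/-- The product `g_k ⋯ g_1 g_0` of the group entries of a word. -/
def chainProd (k : ℕ) (gs : ℕ → G) : G :=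
  (((List.range (k + 1)).map gs).reverse).prod

/-- The relation `(γ h, w) ∼ (γ, h • w)` (for `h ∈ D̄`) defining the induced space
`G ×_{D̄} W`. -/
def IndRel (Dbar : Subgroup G) (W : Type w) [MulAction ↥Dbar W] :
    G × W → G × W → Prop :=
  fun p q => ∃ h : ↥Dbar, p.1 = q.1 * (h : G) ∧ q.2 = h • p.2

/-- The induced space `G ×_{D̄} W`. -/
def IndSp (Dbar : Subgroup G) (W : Type w) [MulAction ↥Dbar W] : Type (max u w) :=
  Quot (IndRel Dbar W)

/-- The class `[γ, w]` in `G ×_{D̄} W`. -/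
def imk (Dbar : Subgroup G) (W : Type w) [MulAction ↥Dbar W] (p : G × W) :
    IndSp Dbar W :=
  Quot.mk _ p

lemma chainProd_zero (gs : ℕ → G) : chainProd 0 gs = gs 0 := by
  simp [chainProd, List.range_succ]

lemma chainProd_succ (k : ℕ) (gs : ℕ → G) :
    chainProd (k + 1) gs = gs (k + 1) * chainProd k gs := by
  simp [chainProd, List.range_succ]

lemma chainProd_congr (k : ℕ) (gs gs' : ℕ → G) (h : ∀ n ≤ k, gs n = gs' n) :
    chainProd k gs = chainProd k gs' := by
  induction k with
  | zero => rw [chainProd_zero, chainProd_zero, h 0 le_rfl]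
  | succ k ih =>
    rw [chainProd_succ, chainProd_succ, h _ le_rfl,
      ih fun n hn => h n (hn.trans (Nat.le_succ k))]

lemma chainProd_split (a m : ℕ) (gs : ℕ → G) :
    chainProd (a + m + 1) gs = chainProd m (fun n => gs (n + (a + 1))) * chainProd a gs := by
  induction m with
  | zero => simp [chainProd_succ, chainProd_zero]
  | succ m ih =>
    rw [show a + (m + 1) + 1 = (a + m + 1) + 1 by omega, chainProd_succ, ih, ← mul_assoc]
    conv_rhs => rw [chainProd_succ]
    congr 2
    simp only [show m + 1 + (a + 1) = a + m + 1 + 1 by omega]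

lemma chainProd_split' (k j : ℕ) (h1 : 1 ≤ j) (h2 : j ≤ k) (gs : ℕ → G) :
    chainProd k gs = chainProd (k - j) (fun n => gs (n + j)) * chainProd (j - 1) gs := by
  have h := chainProd_split (j - 1) (k - j) gs
  rw [show j - 1 + (k - j) + 1 = k by omega, show j - 1 + 1 = j by omega] at h
  exact h

lemma chainProd_merge (a m : ℕ) (gs : ℕ → G) :
    chainProd (a + m)
      (fun n => if n < a then gs n else if n = a then gs (a + 1) * gs a else gs (n + 1)) =
    chainProd (a + m + 1) gs := by
  induction m with
  | zero =>
    cases a with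
    | zero => simp [chainProd_zero, chainProd_succ]
    | succ b =>
      rw [Nat.add_zero, chainProd_succ, chainProd_succ, chainProd_succ,
        chainProd_congr b
          (fun n => if n < b + 1 then gs n
            else if n = b + 1 then gs (b + 1 + 1) * gs (b + 1) else gs (n + 1)) gs
          (fun n hn => by simp only [if_pos (Nat.lt_succ_of_le hn)])]
      simp [mul_assoc]
  | succ m ih =>
    rw [show a + (m + 1) = (a + m) + 1 by omega, chainProd_succ, ih]
    conv_rhs => rw [chainProd_succ]
    congr 1
    simp only [if_neg (show ¬(a + m + 1 < a) by omega), if_neg (show ¬(a + m + 1 = a) by omega)]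

lemma chainProd_merge' (k j : ℕ) (h1 : 1 ≤ j) (h2 : j ≤ k) (gs : ℕ → G) :
    chainProd (k - 1)
      (fun n => if n < j - 1 then gs n else if n = j - 1 then gs j * gs (j - 1) else gs (n + 1)) =
    chainProd k gs := by
  have h := chainProd_merge (j - 1) (k - j) gs
  rw [show j - 1 + (k - j) = k - 1 by omega, show j - 1 + 1 = j by omega,
    show k - 1 + 1 = k by omega] at h
  exact h

lemma chainProd_del (j m : ℕ) (gs : ℕ → G) (hj : 1 ≤ j) (hg : gs j = 1) :
    chainProd (j + m) (fun n => if n < j then gs n else gs (n + 1)) =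
    chainProd (j + m + 1) gs := by
  induction m with
  | zero =>
    obtain ⟨b, rfl⟩ : ∃ b, j = b + 1 := ⟨j - 1, by omega⟩
    rw [Nat.add_zero, chainProd_succ, chainProd_succ, chainProd_succ, hg, one_mul]
    simp only [if_neg (lt_irrefl (b + 1))]
    rw [chainProd_congr b _ gs (fun n hn => by simp only [if_pos (Nat.lt_succ_of_le hn)])]
  | succ m ih =>
    rw [show j + (m + 1) = (j + m) + 1 by omega, chainProd_succ, ih]
    conv_rhs => rw [chainProd_succ]
    congr 1
    simp only [if_neg (show ¬(j + m + 1 < j) by omega)]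

lemma chainProd_del' (k j : ℕ) (h1 : 1 ≤ j) (h2 : j ≤ k - 1) (gs : ℕ → G) (hg : gs j = 1) :
    chainProd (k - 1) (fun n => if n < j then gs n else gs (n + 1)) = chainProd k gs := by
  have h := chainProd_del j (k - 1 - j) gs h1 hg
  rw [show j + (k - 1 - j) = k - 1 by omega, show k - 1 + 1 = k by omega] at h
  exact h

lemma discreteTopology_quot {α : Type*} [TopologicalSpace α] [DiscreteTopology α]
    (s : Setoid α) : DiscreteTopology (Quotient s) := by
  rw [discreteTopology_iff_forall_isOpen]
  intro t
  rw [← isQuotientMap_quotient_mk'.isOpen_preimage]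
  exact isOpen_discrete _

variable {Z : Type v} [TopologicalSpace Z]

/-- The product homotopy coherent action on `Q × Z` for a discrete `G`-set `Q`. -/
def prodHC (A : HCAction G Z) (Q : Type*) [TopologicalSpace Q] [DiscreteTopology Q]
    [MulAction G Q] : HCAction G (Q × Z) where
  Γ k gs ts p := (chainProd k gs • p.1, A.Γ k gs ts p.2)
  continuous k gs := by
    refine Continuous.prodMk ?_ ?_
    · exact continuous_of_discreteTopology.comp (continuous_fst.comp continuous_snd)
    · exact (A.continuous k gs).comp
        (continuous_fst.prodMk (continuous_snd.comp continuous_snd))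
  junk k gs gs' ts ts' z hg ht := by
    rw [Prod.mk.injEq]
    exact ⟨by rw [chainProd_congr k gs gs' hg], A.junk k gs gs' ts ts' z.2 hg ht⟩
  rel_t0 k j gs ts z h1 h2 h3 := by
    rw [Prod.mk.injEq]
    constructor
    · rw [smul_smul, ← chainProd_split' k j h1 h2 gs]
    · exact A.rel_t0 k j gs ts z.2 h1 h2 h3
  rel_t1 k j gs ts z h1 h2 h3 := by
    rw [Prod.mk.injEq]
    exact ⟨by rw [chainProd_merge' k j h1 h2 gs], A.rel_t1 k j gs ts z.2 h1 h2 h3⟩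
  rel_g0 k gs ts z h1 h2 := by
    rw [Prod.mk.injEq]
    constructor
    · rw [chainProd_split' k 1 le_rfl h1 gs, Nat.sub_self, chainProd_zero, h2, mul_one]
    · exact A.rel_g0 k gs ts z.2 h1 h2
  rel_gj k j gs ts z h1 h2 h3 := by
    rw [Prod.mk.injEq]
    exact ⟨by rw [chainProd_del' k j h1 h2 gs h3], A.rel_gj k j gs ts z.2 h1 h2 h3⟩
  rel_gk k gs ts z h1 h2 := by
    rw [Prod.mk.injEq]
    constructor
    · conv_lhs => rw [show k = (k - 1) + 1 by omega, chainProd_succ,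
        show k - 1 + 1 = k by omega, h2, one_mul]
    · exact A.rel_gk k gs ts z.2 h1 h2
  unit gs ts z h := by
    rw [chainProd_zero, h, one_smul, A.unit gs ts z.2 h]

theorem statement10
    -- finite groups `F_n` and epimorphisms `α_n : G → F_n`
    (F : ℕ → Type u) [∀ n, Group (F n)] [∀ n, Finite (F n)]
    (α : ∀ n, G →* F n) (hα : ∀ n, Function.Surjective (α n))
    -- sets `𝒟_n` of subgroups of `F_n`
    (𝒟 : ∀ n, Set (Subgroup (F n)))
    -- homotopy coherent `G`-actions `(Γ_{n,D}, Z_{n,D})`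
    (Z : ∀ n, Subgroup (F n) → Type v) [∀ n D, TopologicalSpace (Z n D)]
    (Γ : ∀ n D, HCAction G (Z n D))
    -- metric spaces `W_{n,D}` with isometric `D̄`-actions, `D̄ = α_n⁻¹(D)`
    (W : ∀ n, Subgroup (F n) → Type w)
    [∀ n D, MetricSpace (W n D)]
    [inst : ∀ n (D : Subgroup (F n)), MulAction ↥(D.comap (α n)) (W n D)]
    (hiso : ∀ n (D : Subgroup (F n)) (h : ↥(D.comap (α n))) (w w' : W n D),
      dist (h • w) (h • w') = dist w w')
    -- `D̄`-equivariant maps `f_{n,D} : G × Z_{n,D} → W_{n,D}`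
    (f : ∀ n D, G × Z n D → W n D)
    (hequi : ∀ n (D : Subgroup (F n)) (h : ↥(D.comap (α n))) (γ : G) (z : Z n D),
      f n D ((h : G) * γ, z) = h • f n D (γ, z))
    -- hypothesis: the almost-equivariance condition, uniformly in `D ∈ 𝒟_n` and `γ`
    (hconv : ∀ (k : ℕ) (gs : ℕ → G), ∀ ε > (0 : ℝ), ∃ N : ℕ, ∀ n ≥ N,
      ∀ D ∈ 𝒟 n, ∀ (γ : G) (ts : ℕ → I) (z : Z n D),
        dist (f n D (γ, (Γ n D).Γ k gs ts z)) (f n D (γ * chainProd k gs, z)) ≤ ε) :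
    ∃ (Γ' : ∀ n (D : Subgroup (F n)), HCAction G ((G ⧸ D.comap (α n)) × Z n D))
      (f' : ∀ n (D : Subgroup (F n)),
        (G ⧸ D.comap (α n)) × Z n D → IndSp (D.comap (α n)) (W n D))
      (act' : ∀ n (D : Subgroup (F n)),
        G → IndSp (D.comap (α n)) (W n D) → IndSp (D.comap (α n)) (W n D)),
      -- (a): the homotopy coherent action `Γ'` on `G/D̄ × Z` is given by the stated formula
      (∀ n, ∀ D ∈ 𝒟 n, ∀ (k : ℕ) (gs : ℕ → G) (ts : ℕ → I) (c : G ⧸ D.comap (α n))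
        (z : Z n D),
        (Γ' n D).Γ k gs ts (c, z) = (chainProd k gs • c, (Γ n D).Γ k gs ts z)) ∧
      -- (b): `f'(γ D̄, z) = [γ, f(γ⁻¹, z)]` is well defined
      (∀ n, ∀ D ∈ 𝒟 n, ∀ (γ : G) (z : Z n D),
        f' n D (↑γ, z) = imk (D.comap (α n)) (W n D) (γ, f n D (γ⁻¹, z))) ∧
      -- the `G`-action `g · [γ, w] = [g γ, w]` on `G ×_{D̄} W` is well defined
      (∀ n, ∀ D ∈ 𝒟 n, ∀ (g γ : G) (w : W n D),
        act' n D g (imk (D.comap (α n)) (W n D) (γ, w)) =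
          imk (D.comap (α n)) (W n D) (g * γ, w)) ∧
      -- (c): the almost-equivariance of the maps `f'`, where both compared points lie in the
      -- same component `{(g_k⋯g_0 γ)·D̄} ×_{D̄} W` so that their distance is computed on
      -- representatives with the common first coordinate `g_k⋯g_0 γ`
      (∀ (k : ℕ) (gs : ℕ → G), ∀ ε > (0 : ℝ), ∃ N : ℕ, ∀ n ≥ N,
        ∀ D ∈ 𝒟 n, ∀ (γ : G) (ts : ℕ → I) (z : Z n D),
          f' n D ((Γ' n D).Γ k gs ts (↑γ, z)) =
            imk (D.comap (α n)) (W n D)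
              (chainProd k gs * γ, f n D ((chainProd k gs * γ)⁻¹, (Γ n D).Γ k gs ts z)) ∧
          act' n D (chainProd k gs) (f' n D (↑γ, z)) =
            imk (D.comap (α n)) (W n D) (chainProd k gs * γ, f n D (γ⁻¹, z)) ∧
          dist (f n D ((chainProd k gs * γ)⁻¹, (Γ n D).Γ k gs ts z)) (f n D (γ⁻¹, z)) ≤ ε) := by
  classical
  haveI : ∀ n (D : Subgroup (F n)), DiscreteTopology (G ⧸ D.comap (α n)) :=
    fun n D => discreteTopology_quot _
  -- well-definedness of f'
  have hf'wd : ∀ n (D : Subgroup (F n)) (z : Z n D) (γ γ' : G),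
      @Setoid.r G (QuotientGroup.leftRel (D.comap (α n))) γ γ' →
      imk (D.comap (α n)) (W n D) (γ, f n D (γ⁻¹, z)) =
        imk (D.comap (α n)) (W n D) (γ', f n D (γ'⁻¹, z)) := by
    intro n D z γ γ' hr
    rw [QuotientGroup.leftRel_apply] at hr
    refine (Quot.sound ⟨⟨γ⁻¹ * γ', hr⟩, ?_, ?_⟩).symm
    · show γ' = γ * (γ⁻¹ * γ')
      rw [mul_inv_cancel_left]
    · rw [← hequi n D ⟨γ⁻¹ * γ', hr⟩ γ'⁻¹ z]
      show f n D (γ⁻¹, z) = f n D (γ⁻¹ * γ' * γ'⁻¹, z)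
      rw [mul_inv_cancel_right]
  -- well-definedness of act'
  have hactwd : ∀ n (D : Subgroup (F n)) (g : G) (p q : G × W n D),
      IndRel (D.comap (α n)) (W n D) p q →
      imk (D.comap (α n)) (W n D) (g * p.1, p.2) =
        imk (D.comap (α n)) (W n D) (g * q.1, q.2) := by
    rintro n D g p q ⟨h, h1, h2⟩
    exact Quot.sound ⟨h, by rw [h1, mul_assoc], h2⟩
  refine ⟨fun n D => prodHC (Γ n D) (G ⧸ D.comap (α n)),
    fun n D p => Quotient.liftOn' p.1
      (fun γ => imk (D.comap (α n)) (W n D) (γ, f n D (γ⁻¹, p.2)))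
      (fun γ γ' hr => hf'wd n D p.2 γ γ' hr),
    fun n D g => Quot.lift (fun p => imk (D.comap (α n)) (W n D) (g * p.1, p.2))
      (fun p q hr => hactwd n D g p q hr),
    fun n D _ k gs ts c z => rfl,
    fun n D _ γ z => rfl,
    fun n D _ g γ w => rfl,
    ?_⟩
  intro k gs ε hε
  obtain ⟨N, hN⟩ := hconv k gs ε hε
  refine ⟨N, fun n hn D hD γ ts z => ⟨rfl, rfl, ?_⟩⟩
  have h3 := hN n hn D hD (chainProd k gs * γ)⁻¹ ts z
  rwa [show (chainProd k gs * γ)⁻¹ * chainProd k gs = γ⁻¹ by group] at h3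


end HCAction
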